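/- Let g be a diffeomorphism which, in local coordinates on a neighborhood V of a hyperbolic fixed point p₁, coincides with the hyperbolic linear map Dg(p₁) with invariant splitting E^s_{p₁} ⊕ E^u_{p₁} of ℝ^{2n}. Set V^u_k = V ∩ g(V) ∩ … ∩ g^k(V) and V^s_k = V ∩ g^{-1}(V) ∩ … ∩ g^{-k}(V), and for vectors v, w and subspaces E define ang(v,w) = |tan(arccos(⟨v,w⟩/(‖v‖‖w‖)))|, ang(v,E) = min over unit vectors w ∈ E of ang(v,w). Then there exist positive constants K₆ and K₇ such that: (1) if z ∈ V^u_k, v ∈ ℝ^{2n} \ E^u_{p₁}, and ang(Dg^{-k}(z)(v), E^u_{p₁}) ≥ 1, then K₆ ‖Dg_{p₁}^k|E^s‖^{-1} |v| min{ang(v, E^u_{p₁}), 1} ≤ |Dg^{-k}(z)(v)| ≤ K₇ ‖Dg_{p₁}^{-k}|E^s‖ |v|; (2) if z ∈ V^s_k, v ∈ ℝ^{2n} \ E^s_{p₁}, and ang(Dg^k(z)(v), E^s_{p₁}) ≥ 1, then K₆ ‖Dg_{p₁}^{-k}|E^u‖^{-1} |v| min{ang(v, E^s_{p₁}), 1}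 ≤ |Dg^k(z)(v)| ≤ K₇ ‖Dg_{p₁}^k|E^u‖ |v|. -/

import Mathlib

/- Core definitions: C¹ diffeomorphisms of a compact d-dimensional manifold,
hyperbolic periodic points, invariant manifolds, homoclinic classes, dominated
splittings, symbolic extensions, entropies, etc. -/

open scoped Manifold Topology ENNReal
open Filter Set MeasureTheory

/-- Euclidean model space ℝ^d. -/
abbrev EucE (d : ℕ) := EuclideanSpace ℝ (Fin d)

/-- The space of C¹ diffeomorphisms of a manifold `M` modelled on `ℝ^d`. -/
abbrev Diff1 (d : ℕ) (M : Type*) [TopologicalSpace M] [ChartedSpace (EucE d) M] :=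
  Diffeomorph (𝓡 d) (𝓡 d) M M 1

/-- The derivative of `f` at `x`, read in the preferred charts (which identify all
tangent spaces with the model space `ℝ^d`). -/
noncomputable def deriv1 (d : ℕ) {M : Type*} [TopologicalSpace M] [ChartedSpace (EucE d) M]
    (f : M → M) (x : M) : EucE d →L[ℝ] EucE d :=
  mfderiv (𝓡 d) (𝓡 d) f x

/-- The derivative of the `n`-th iterate of `f` at `x`. -/
noncomputable def derivIter (d : ℕ) {M : Type*} [TopologicalSpace M] [ChartedSpace (EucE d) M]
    (f : M → M) (n : ℕ) (x : M) : EucE d →L[ℝ] EucE d :=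
  deriv1 d (f^[n]) x

section Core

variable (d : ℕ) {M : Type*} [MetricSpace M] [ChartedSpace (EucE d) M]

/-- The C¹ topology on `Diff1 d M`: the topology induced by uniform convergence of the maps,
their derivatives (in charts), their inverses and the derivatives of the inverses. -/
noncomputable instance Diff1.instTopologicalSpace : TopologicalSpace (Diff1 d M) :=
  TopologicalSpace.induced
    (fun f : Diff1 d M =>
      (UniformFun.ofFun ⇑f,
       UniformFun.ofFun (fun x => deriv1 d (⇑f) x),
       UniformFun.ofFun ⇑f.symm,
       UniformFun.ofFun (fun x => deriv1 d (⇑f.symm) x)))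
    inferInstance

/-- A C¹ distance between two diffeomorphisms: uniform distance of the maps, their
derivatives (in charts), and similarly for the inverses. -/
noncomputable def c1Dist (f g : Diff1 d M) : ℝ :=
  (⨆ x : M, dist (f x) (g x)) + (⨆ x : M, dist (deriv1 d (⇑f) x) (deriv1 d (⇑g) x)) +
    (⨆ x : M, dist (f.symm x) (g.symm x)) +
    (⨆ x : M, dist (deriv1 d (⇑f.symm) x) (deriv1 d (⇑g.symm) x))

/-- The `n`-th iterate of a diffeomorphism, for `n : ℤ`. -/
noncomputable def zIter (f : Diff1 d M) (n : ℤ) : M → M :=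
  if 0 ≤ n then (⇑f)^[n.toNat] else (⇑f.symm)^[(-n).toNat]

/-- The full orbit `{fⁿ(x) : n ∈ ℤ}` of a point. -/
noncomputable def orbitZ (f : Diff1 d M) (x : M) : Set M :=
  Set.range fun n : ℤ => zIter d f n x

/-- The power `f^t` of a diffeomorphism as a diffeomorphism. -/
noncomputable def d1pow (f : Diff1 d M) : ℕ → Diff1 d M
  | 0 => Diffeomorph.refl (𝓡 d) M 1
  | n + 1 => (d1pow f n).trans f

/-- The space of vectors contracted by the derivatives of the iterates of `f` at `x`.
At a point `x` of the stable manifold of a hyperbolic periodic orbit this is the tangent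
space of the stable manifold at `x`; similarly, `stableSpace d (⇑f.symm) x` is the tangent
space of the unstable manifold. -/
noncomputable def stableSpace {M : Type*} [TopologicalSpace M] [ChartedSpace (EucE d) M]
    (f : M → M) (x : M) : Submodule ℝ (EucE d) where
  carrier := {v | Tendsto (fun n => derivIter d f n x v) atTop (𝓝 0)}
  add_mem' := by
    intro a b ha hb
    simpa [map_add] using ha.add hb
  zero_mem' := by simp [tendsto_const_nhds]
  smul_mem' := by
    intro c v hv
    simpa [_root_.map_smul] using hv.const_smul c

/-- The index of a (hyperbolic periodic) point: the dimension of its stable space. -/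
noncomputable def stableIndex {M : Type*} [TopologicalSpace M] [ChartedSpace (EucE d) M]
    (f : M → M) (p : M) : ℕ :=
  Module.finrank ℝ (stableSpace d f p)

/-- A continuous linear self-map of `ℝ^d` is hyperbolic with splitting `Es ⊕ Eu` if the
splitting is invariant, `Es` is uniformly contracted and `Eu` uniformly expanded.  (This is
equivalent to: no eigenvalue on the unit circle, with `Es`, `Eu` the stable/unstable spaces.) -/
def HyperbolicSplitting {d : ℕ} (A : EucE d →L[ℝ] EucE d) (Es Eu : Submodule ℝ (EucE d)) : Prop :=
  IsCompl Es Eu ∧ (∀ v ∈ Es, A v ∈ Es) ∧ (∀ v ∈ Eu, A v ∈ Eu) ∧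
    ∃ C > (0 : ℝ), ∃ κ ∈ Set.Ioo (0 : ℝ) 1,
      (∀ n : ℕ, ∀ v ∈ Es, ‖(A ^ n) v‖ ≤ C * κ ^ n * ‖v‖) ∧
      (∀ n : ℕ, ∀ v ∈ Eu, ‖v‖ ≤ C * κ ^ n * ‖(A ^ n) v‖)

/-- `p` is a hyperbolic periodic point of `f`: it is periodic with some period `τ`, and the
derivative of `f^τ` at `p` is a hyperbolic linear map. -/
def IsHyperbolicPeriodicPt {M : Type*} [TopologicalSpace M] [ChartedSpace (EucE d) M]
    (f : M → M) (p : M) : Prop :=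
  ∃ τ > 0, f^[τ] p = p ∧ ∃ Es Eu, HyperbolicSplitting (derivIter d f τ p) Es Eu

/-- The stable set (stable manifold) of the orbit of a periodic point `p`. -/
noncomputable def stableSetOrbit (f : Diff1 d M) (p : M) : Set M :=
  {x | ∃ q ∈ orbitZ d f p, Tendsto (fun n => dist ((⇑f)^[n] x) ((⇑f)^[n] q)) atTop (𝓝 0)}

/-- The unstable set (unstable manifold) of the orbit of a periodic point `p`. -/
noncomputable def unstableSetOrbit (f : Diff1 d M) (p : M) : Set M :=
  {x | ∃ q ∈ orbitZ d f p, Tendsto (fun n => dist ((⇑f.symm)^[n] x) ((⇑f.symm)^[n] q)) atTop (𝓝 0)}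

/-- At a point `x` lying on a stable and an unstable manifold, the intersection is
transverse if the tangent spaces of those manifolds span the whole tangent space. -/
def TransverseAt (f : Diff1 d M) (x : M) : Prop :=
  stableSpace d (⇑f) x ⊔ stableSpace d (⇑f.symm) x = ⊤

/-- The homoclinic class of `p`: the closure of the set of transverse intersection points
of the stable and unstable manifolds of the orbit of `p`. -/
noncomputable def homoclinicClass (f : Diff1 d M) (p : M) : Set M :=
  closure {x | x ∈ stableSetOrbit d f p ∧ x ∈ unstableSetOrbit d f p ∧ TransverseAt d f x}

/-- Two (hyperbolic periodic) points are homoclinically related if the stable manifold of each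
meets the unstable manifold of the other transversally. -/
def HomoclinicallyRelated (f : Diff1 d M) (p q : M) : Prop :=
  (∃ x, x ∈ stableSetOrbit d f p ∧ x ∈ unstableSetOrbit d f q ∧ TransverseAt d f x) ∧
  (∃ x, x ∈ stableSetOrbit d f q ∧ x ∈ unstableSetOrbit d f p ∧ TransverseAt d f x)

/-- `f` has a homoclinic tangency associated to the hyperbolic periodic point `p`:
some intersection point of the stable and unstable manifolds of the orbit of `p`
is non-transverse. -/
def HasHomoclinicTangencyAt (f : Diff1 d M) (p : M) : Prop :=
  IsHyperbolicPeriodicPt d (⇑f) p ∧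
    ∃ x, x ∈ stableSetOrbit d f p ∧ x ∈ unstableSetOrbit d f p ∧ ¬ TransverseAt d f x

/-- `f` exhibits a homoclinic tangency. -/
def HasHomoclinicTangency (f : Diff1 d M) : Prop :=
  ∃ p, HasHomoclinicTangencyAt d f p

/-- Kupka–Smale diffeomorphism: every periodic point is hyperbolic and invariant manifolds
of periodic orbits meet transversally. -/
def KupkaSmale (f : Diff1 d M) : Prop :=
  (∀ p : M, (∃ τ > 0, (⇑f)^[τ] p = p) → IsHyperbolicPeriodicPt d (⇑f) p) ∧
  (∀ p q : M, IsHyperbolicPeriodicPt d (⇑f) p → IsHyperbolicPeriodicPt d (⇑f) q →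
    ∀ x, x ∈ stableSetOrbit d f p → x ∈ unstableSetOrbit d f q → TransverseAt d f x)

/-- A dominated splitting `V 0 ⊕ … ⊕ V (k-1)` of the tangent bundle over `Λ`. -/
def IsDominatedSplitting (f : Diff1 d M) (Λ : Set M) {k : ℕ}
    (V : Fin k → M → Submodule ℝ (EucE d)) : Prop :=
  (∀ x ∈ Λ, (⨆ i, V i x) = ⊤) ∧
  (∀ x ∈ Λ, ∑ i, Module.finrank ℝ (V i x) = d) ∧
  (∀ x ∈ Λ, ∀ i, ∀ v ∈ V i x, deriv1 d (⇑f) x v ∈ V i (f x)) ∧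
  ∃ C > (0 : ℝ), ∃ lam ∈ Set.Ioo (0 : ℝ) 1, ∀ x ∈ Λ, ∀ n : ℕ, ∀ i j : Fin k, i < j →
    ∀ u ∈ V i x, ∀ w ∈ V j ((⇑f)^[n] x),
      ‖derivIter d (⇑f) n x u‖ * ‖derivIter d (⇑f.symm) n ((⇑f)^[n] x) w‖ ≤
        C * lam ^ n * (‖u‖ * ‖w‖)

/-- The smallest index of a hyperbolic periodic point of `f` in `Λ`. -/
noncomputable def minIndex (f : Diff1 d M) (Λ : Set M) : ℕ :=
  sInf {i | ∃ q ∈ Λ, IsHyperbolicPeriodicPt d (⇑f) q ∧ stableIndex d (⇑f) q = i}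

/-- The greatest index of a hyperbolic periodic point of `f` in `Λ`. -/
noncomputable def maxIndex (f : Diff1 d M) (Λ : Set M) : ℕ :=
  sSup {i | ∃ q ∈ Λ, IsHyperbolicPeriodicPt d (⇑f) q ∧ stableIndex d (⇑f) q = i}

/-- A good splitting over `Λ`: a dominated splitting `E ⊕ F₁ ⊕ … ⊕ F_l ⊕ G` where
`dim E = s` (smallest index in `Λ`), `dim G = d - u` (`u` the greatest index in `Λ`), and all
middle bundles are one-dimensional. -/
def IsGoodSplitting (f : Diff1 d M) (Λ : Set M) {l : ℕ}
    (V : Fin (l + 2) → M → Submodule ℝ (EucE d)) : Prop :=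
  IsDominatedSplitting d f Λ V ∧
  (∀ x ∈ Λ, Module.finrank ℝ (V 0 x) = minIndex d f Λ) ∧
  (∀ x ∈ Λ, Module.finrank ℝ (V (Fin.last (l + 1)) x) = d - maxIndex d f Λ) ∧
  (∀ j : Fin (l + 2), j ≠ 0 → j ≠ Fin.last (l + 1) →
    ∀ x ∈ Λ, Module.finrank ℝ (V j x) = 1)

/-- `Λ` has a good decomposition for `f`. -/
def HasGoodDecomposition (f : Diff1 d M) (Λ : Set M) : Prop :=
  ∃ (l : ℕ) (V : Fin (l + 2) → M → Submodule ℝ (EucE d)), IsGoodSplitting d f Λ V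

/-- `Λ` is partially hyperbolic: it admits a dominated splitting whose first bundle is
uniformly contracted and whose last bundle is uniformly expanded. -/
def IsPartiallyHyperbolicOn (f : Diff1 d M) (Λ : Set M) : Prop :=
  ∃ (l : ℕ) (V : Fin (l + 2) → M → Submodule ℝ (EucE d)),
    IsDominatedSplitting d f Λ V ∧
    ∃ C > (0 : ℝ), ∃ κ ∈ Set.Ioo (0 : ℝ) 1, ∀ x ∈ Λ, ∀ n : ℕ,
      (∀ v ∈ V 0 x, ‖derivIter d (⇑f) n x v‖ ≤ C * κ ^ n * ‖v‖) ∧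
      (∀ v ∈ V (Fin.last (l + 1)) x, ‖derivIter d (⇑f.symm) n x v‖ ≤ C * κ ^ n * ‖v‖)

/-- A hyperbolic structure on `Λ`: an invariant splitting `Es ⊕ Eu` with uniform
contraction on `Es` (forwards) and on `Eu` (backwards). -/
def IsHyperbolicSetWith (f : Diff1 d M) (Λ : Set M)
    (Es Eu : M → Submodule ℝ (EucE d)) : Prop :=
  (∀ x ∈ Λ, IsCompl (Es x) (Eu x)) ∧
  (∀ x ∈ Λ, (∀ v ∈ Es x, deriv1 d (⇑f) x v ∈ Es (f x)) ∧
            (∀ v ∈ Eu x, deriv1 d (⇑f) x v ∈ Eu (f x))) ∧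
  ∃ C > (0 : ℝ), ∃ κ ∈ Set.Ioo (0 : ℝ) 1, ∀ x ∈ Λ, ∀ n : ℕ,
    (∀ v ∈ Es x, ‖derivIter d (⇑f) n x v‖ ≤ C * κ ^ n * ‖v‖) ∧
    (∀ v ∈ Eu x, ‖derivIter d (⇑f.symm) n x v‖ ≤ C * κ ^ n * ‖v‖)

/-- `Λ` is a hyperbolic set for `f`. -/
def IsHyperbolicSet (f : Diff1 d M) (Λ : Set M) : Prop :=
  ∃ Es Eu, IsHyperbolicSetWith d f Λ Es Eu

/-- `Λ` is an isolated invariant set: `Λ = ⋂_{n ∈ ℤ} fⁿ(U)` for some neighborhood `U`. -/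
def IsIsolatedSet (f : Diff1 d M) (Λ : Set M) : Prop :=
  ∃ U : Set M, IsOpen U ∧ Λ ⊆ U ∧ Λ = ⋂ n : ℤ, zIter d f n '' U

/-- A hyperbolic basic set: compact, invariant, hyperbolic, isolated, with a dense orbit. -/
def IsHyperbolicBasicSet (f : Diff1 d M) (Λ : Set M) : Prop :=
  IsCompact Λ ∧ (⇑f) '' Λ = Λ ∧ IsHyperbolicSet d f Λ ∧ IsIsolatedSet d f Λ ∧
    ∃ x ∈ Λ, Λ ⊆ closure (orbitZ d f x)

/-- A periodic hyperbolic basic set: a finite union `⋃_{0 ≤ j < t} f^j(Λ̄)` where `Λ̄`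
(the base set) is a hyperbolic basic set of `f^t`. -/
def IsPeriodicHyperbolicBasicSet (f : Diff1 d M) (Λ : Set M) : Prop :=
  ∃ t > 0, ∃ Λb : Set M, IsHyperbolicBasicSet d (d1pow d f t) Λb ∧
    Λ = ⋃ j ∈ Finset.range t, (⇑f)^[j] '' Λb

/-- The set of Lyapunov exponents of `f` at a (periodic) point `p`. -/
noncomputable def lyapExps {M : Type*} [TopologicalSpace M] [ChartedSpace (EucE d) M]
    (f : M → M) (p : M) : Set ℝ :=
  {l | ∃ v : EucE d, v ≠ 0 ∧
    Tendsto (fun n : ℕ => Real.log ‖derivIter d f n p v‖ / n) atTop (𝓝 l)}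

/-- The smallest positive Lyapunov exponent at `p`. -/
noncomputable def chiPlus {M : Type*} [TopologicalSpace M] [ChartedSpace (EucE d) M]
    (f : M → M) (p : M) : ℝ :=
  sInf {l | l ∈ lyapExps d f p ∧ 0 < l}

/-- The biggest negative Lyapunov exponent at `p`. -/
noncomputable def chiMinus {M : Type*} [TopologicalSpace M] [ChartedSpace (EucE d) M]
    (f : M → M) (p : M) : ℝ :=
  sSup {l | l ∈ lyapExps d f p ∧ l < 0}

/-- `χ(p,f) = min {χ⁺(p,f), -χ⁻(p,f)}`. -/
noncomputable def chi {M : Type*} [TopologicalSpace M] [ChartedSpace (EucE d) M]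
    (f : M → M) (p : M) : ℝ :=
  min (chiPlus d f p) (-(chiMinus d f p))

end Core

/-! ### Symbolic dynamics and entropies -/

/-- The shift map on bi-infinite sequences. -/
def shiftMap {A : Type*} : (ℤ → A) → (ℤ → A) := fun x n => x (n + 1)

/-- A subshift: a closed shift-invariant subset of a full shift on finitely many symbols. -/
def IsSubshift {k : ℕ} (N : Set (ℤ → Fin k)) : Prop :=
  IsClosed N ∧ shiftMap '' N = N

/-- `f` restricted to the invariant set `Λ` has a symbolic extension: there is a subshift
`(N, σ)` and a continuous surjection `π : N → Λ` with `π ∘ σ = f ∘ π`. -/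
def HasSymbolicExtensionOn {M : Type*} [TopologicalSpace M] (f : M → M) (Λ : Set M) : Prop :=
  ∃ (k : ℕ) (N : Set (ℤ → Fin k)) (π : (ℤ → Fin k) → M),
    IsSubshift N ∧ ContinuousOn π N ∧ π '' N = Λ ∧ ∀ x ∈ N, π (shiftMap x) = f (π x)

/-- The entropy `H(μ, α ∨ T⁻¹α ∨ … ∨ T⁻⁽ⁿ⁻¹⁾α)` of the `n`-th dynamical refinement of the
finite measurable partition of `X` induced by `α : X → Fin k`. -/
noncomputable def cylinderEntropy {X : Type*} [MeasurableSpace X] (μ : Measure X) (T : X → X)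
    {k : ℕ} (α : X → Fin k) (n : ℕ) : ℝ :=
  ∑ w : Fin n → Fin k, Real.negMulLog (μ {x | ∀ i : Fin n, α (T^[(i : ℕ)] x) = w i}).toReal

/-- The measure-theoretic (Kolmogorov–Sinai) entropy of `T` with respect to `μ`:
the supremum over finite measurable partitions of the asymptotic average entropy of
dynamical refinements. -/
noncomputable def mEntropy {X : Type*} [MeasurableSpace X] (μ : Measure X) (T : X → X) : EReal :=
  ⨆ (k : ℕ) (α : X → Fin k) (_ : Measurable α),
    Filter.atTop.liminf fun n : ℕ => ((cylinderEntropy μ T α n / n : ℝ) : EReal)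

/-- `f` restricted to `Λ` has a principal symbolic extension: a symbolic extension
`π : N → Λ` such that `h_{π_*μ}(f) = h_μ(σ)` for every shift-invariant probability
measure `μ` carried by `N`. -/
def HasPrincipalSymbolicExtensionOn {M : Type*} [TopologicalSpace M] [MeasurableSpace M]
    (f : M → M) (Λ : Set M) : Prop :=
  ∃ (k : ℕ) (N : Set (ℤ → Fin k)) (π : (ℤ → Fin k) → M),
    IsSubshift N ∧ ContinuousOn π N ∧ π '' N = Λ ∧ (∀ x ∈ N, π (shiftMap x) = f (π x)) ∧
    ∀ μ : Measure (ℤ → Fin k), IsProbabilityMeasure μ → μ.map shiftMap = μ → μ N = 1 →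
      mEntropy (μ.map π) f = mEntropy μ shiftMap

/-- The periodic measure of a periodic point: the uniform probability on its orbit. -/
noncomputable def periodicMeasure {M : Type*} [MeasurableSpace M] (f : M → M) (p : M) :
    Measure M :=
  ((Function.minimalPeriod f p : ℝ≥0∞))⁻¹ •
    ∑ i ∈ Finset.range (Function.minimalPeriod f p), Measure.dirac (f^[i] p)

section Dyn

variable (d : ℕ) {M : Type*} [MetricSpace M] [ChartedSpace (EucE d) M]
  [MeasurableSpace M] [BorelSpace M]

/-- The items (a), (b), (c) of property `S_{n,·}` for the hyperbolic periodic point `pt`: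
there is a zero-dimensional periodic hyperbolic basic set `Λ ⊆ H(pt,f)` with the same index
as `pt` carrying an ergodic measure of entropy `> χ(pt,f) - 1/n`, all of whose ergodic
measures are `1/n`-close to `μ_pt` and all of whose hyperbolic periodic points `q` satisfy
`χ(q,f) > χ(pt,f) - 1/n`. -/
def SItems (f : Diff1 d M) (n : ℕ) (pt : M) : Prop :=
  ∃ Λ : Set M, IsPeriodicHyperbolicBasicSet d f Λ ∧ IsTotallyDisconnected Λ ∧
    Λ ⊆ homoclinicClass d f pt ∧
    (∃ Es Eu, IsHyperbolicSetWith d f Λ Es Eu ∧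
      ∀ x ∈ Λ, Module.finrank ℝ (Es x) = stableIndex d (⇑f) pt) ∧
    (∃ ν : Measure M, IsProbabilityMeasure ν ∧ Ergodic (⇑f) ν ∧ ν Λ = 1 ∧
      ((chi d (⇑f) pt - 1 / n : ℝ) : EReal) < mEntropy ν (⇑f)) ∧
    (∀ μ : Measure M, IsProbabilityMeasure μ → Ergodic (⇑f) μ → μ Λ = 1 →
      levyProkhorovDist μ (periodicMeasure (⇑f) pt) < 1 / n) ∧
    (∀ q ∈ Λ, IsHyperbolicPeriodicPt d (⇑f) q → chi d (⇑f) pt - 1 / n < chi d (⇑f) q)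

/-- Property `S_{n,p}`: `p` is a hyperbolic periodic point of `f` and the items (a), (b), (c)
hold for every hyperbolic periodic point of period at most `n` homoclinically related to `p`. -/
def PropertyS (f : Diff1 d M) (n : ℕ) (p : M) : Prop :=
  IsHyperbolicPeriodicPt d (⇑f) p ∧
    ∀ pt : M, IsHyperbolicPeriodicPt d (⇑f) pt → Function.minimalPeriod (⇑f) pt ≤ n →
      HomoclinicallyRelated d f p pt → SItems d f n pt

/-- The `ε`-set of `x`: points whose full orbit `ε`-shadows that of `x`. -/
noncomputable def epsSet (f : Diff1 d M) (ε : ℝ) (x : M) : Set M :=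
  {y | ∀ n : ℤ, dist (zIter d f n x) (zIter d f n y) ≤ ε}

/-- `f` is asymptotically h-expansive: `sup_x h(f, Φ_ε(x)) → 0` as `ε → 0`. -/
noncomputable def AsympHExpansive (f : Diff1 d M) : Prop :=
  Tendsto (fun ε : ℝ => ⨆ x : M, Dynamics.coverEntropy (⇑f) (epsSet d f ε x))
    (𝓝[>] (0 : ℝ)) (𝓝 (0 : EReal))

end Dyn

/-- `R` is residual in `U`: it contains a countable intersection of open sets each of which
is dense in `U`, intersected with `U`. -/
def ResidualIn {X : Type*} [TopologicalSpace X] (U R : Set X) : Prop :=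
  ∃ S : ℕ → Set X, (∀ i, IsOpen (S i)) ∧ (∀ i, U ⊆ closure (S i ∩ U)) ∧
    (U ∩ ⋂ i, S i) ⊆ R

/-- The operator norm of `A` restricted to a subspace `S`. -/
noncomputable def subNorm {d : ℕ} (A : EucE d →L[ℝ] EucE d) (S : Submodule ℝ (EucE d)) : ℝ :=
  ‖A.comp S.subtypeL‖

/-- The "angle" `|tan(arccos(⟨v,w⟩ / (‖v‖‖w‖)))|` between two vectors. -/
noncomputable def ang {d : ℕ} (v w : EucE d) : ℝ :=
  |Real.tan (Real.arccos ((inner ℝ v w : ℝ) / (‖v‖ * ‖w‖)))|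

/-- The angle between a vector and a subspace: the infimum of angles with unit vectors
of the subspace. -/
noncomputable def angS {d : ℕ} (v : EucE d) (S : Submodule ℝ (EucE d)) : ℝ :=
  sInf {a | ∃ w ∈ S, ‖w‖ = 1 ∧ a = ang v w}


/-! ### Auxiliary lemmas for Statement 6 -/

section Aux

variable {D : ℕ}

lemma subNorm_nonneg' (B : EucE D →L[ℝ] EucE D) (S : Submodule ℝ (EucE D)) :
    0 ≤ subNorm B S := norm_nonneg (B.comp S.subtypeL)

lemma subNorm_apply_le (B : EucE D →L[ℝ] EucE D) (S : Submodule ℝ (EucE D))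
    {v : EucE D} (hv : v ∈ S) : ‖B v‖ ≤ subNorm B S * ‖v‖ := by
  have := (B.comp S.subtypeL).le_opNorm ⟨v, hv⟩
  simpa [subNorm] using this

lemma angS_nonneg (v : EucE D) (S : Submodule ℝ (EucE D)) : 0 ≤ angS v S := by
  apply Real.sInf_nonneg
  rintro x ⟨w, -, -, rfl⟩
  exact abs_nonneg _

lemma angS_le_ang (v : EucE D) (S : Submodule ℝ (EucE D)) {e : EucE D}
    (he : e ∈ S) (hne : ‖e‖ = 1) : angS v S ≤ ang v e := by
  apply csInf_le
  · exact ⟨0, by rintro x ⟨w, -, -, rfl⟩; exact abs_nonneg _⟩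
  · exact ⟨e, he, hne, rfl⟩

lemma pow_cancel (A : EucE D ≃L[ℝ] EucE D) (k : ℕ) (x : EucE D) :
    ((A : EucE D →L[ℝ] EucE D) ^ k) (((A.symm : EucE D →L[ℝ] EucE D) ^ k) x) = x := by
  induction k generalizing x with
  | zero => simp
  | succ k ih =>
      rw [pow_succ (A : EucE D →L[ℝ] EucE D), pow_succ' (A.symm : EucE D →L[ℝ] EucE D)]
      simpa using ih _

lemma mem_pow {B : EucE D →L[ℝ] EucE D} {S : Submodule ℝ (EucE D)}
    (h : ∀ v ∈ S, B v ∈ S) (k : ℕ) {v : EucE D} (hv : v ∈ S) : (B ^ k) v ∈ S := by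
  induction k with
  | zero => simpa
  | succ k ih => rw [pow_succ']; exact h _ ih

lemma inv_mem (A : EucE D ≃L[ℝ] EucE D) (S : Submodule ℝ (EucE D))
    (h : ∀ v ∈ S, (A : EucE D →L[ℝ] EucE D) v ∈ S) :
    ∀ v ∈ S, (A.symm : EucE D →L[ℝ] EucE D) v ∈ S := by
  intro v hv
  set f : S →ₗ[ℝ] S := LinearMap.restrict ((A : EucE D →L[ℝ] EucE D) : EucE D →ₗ[ℝ] EucE D)
    (fun x hx => h x hx) with hf
  have hinj : Function.Injective f := by
    intro x y hxy
    have : (A : EucE D →L[ℝ] EucE D) (x : EucE D) = (A : EucE D →L[ℝ] EucE D) (y : EucE D) := by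
      have := congrArg (Subtype.val) hxy
      simpa [hf, LinearMap.restrict_apply] using this
    exact Subtype.ext (A.injective (by simpa using this))
  have hsurj : Function.Surjective f := (LinearMap.injective_iff_surjective).mp hinj
  obtain ⟨u, hu⟩ := hsurj ⟨v, hv⟩
  have hu' : (A : EucE D →L[ℝ] EucE D) (u : EucE D) = v := by
    have := congrArg (Subtype.val) hu
    simpa [hf, LinearMap.restrict_apply] using this
  have : (A.symm : EucE D →L[ℝ] EucE D) v = (u : EucE D) := by
    rw [← hu']; simp
  rw [this]; exact u.2

lemma HyperbolicSplitting.symm' {A : EucE D ≃L[ℝ] EucE D} {Es Eu : Submodule ℝ (EucE D)}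
    (h : HyperbolicSplitting (A : EucE D →L[ℝ] EucE D) Es Eu) :
    HyperbolicSplitting (A.symm : EucE D →L[ℝ] EucE D) Eu Es := by
  obtain ⟨hcompl, hmS, hmU, C, hC, κ, hκ, hs, hu⟩ := h
  refine ⟨hcompl.symm, inv_mem A Eu hmU, inv_mem A Es hmS, C, hC, κ, hκ, ?_, ?_⟩
  · intro n v hv
    have hmem : ((A.symm : EucE D →L[ℝ] EucE D) ^ n) v ∈ Eu := mem_pow (inv_mem A Eu hmU) n hv
    have := hu n _ hmem
    rwa [pow_cancel A n v] at this
  · intro n v hv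
    have hmem : ((A.symm : EucE D →L[ℝ] EucE D) ^ n) v ∈ Es := mem_pow (inv_mem A Es hmS) n hv
    have := hs n _ hmem
    rwa [pow_cancel A n v] at this

lemma iter_eq_pow (g : EucE D → EucE D) (V : Set (EucE D)) (B : EucE D →L[ℝ] EucE D)
    (hlin : ∀ x ∈ V, g x = B x) (k : ℕ) (x : EucE D)
    (hx : ∀ i < k, (B ^ i) x ∈ V) : g^[k] x = (B ^ k) x := by
  induction k with
  | zero => simp
  | succ k ih =>
      rw [Function.iterate_succ_apply', ih (fun i hi => hx i (Nat.lt_succ_of_lt hi)),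
        hlin _ (hx k (Nat.lt_succ_self k)), pow_succ']
      simp

lemma fderiv_iter_eq_pow (g : EucE D → EucE D) (V : Set (EucE D)) (hV : IsOpen V)
    (B : EucE D →L[ℝ] EucE D) (hlin : ∀ x ∈ V, g x = B x) (k : ℕ) (z : EucE D)
    (hz : ∀ i < k, g^[i] z ∈ V) : fderiv ℝ (g^[k]) z = B ^ k := by
  have h1 : ∀ i ≤ k, g^[i] z = (B ^ i) z := by
    intro i hi
    induction i with
    | zero => simp
    | succ i ih =>
        rw [Function.iterate_succ_apply', ih (Nat.le_of_succ_le hi),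
          ← ih (Nat.le_of_succ_le hi), hlin _ (hz i (Nat.lt_of_succ_le hi)),
          ih (Nat.le_of_succ_le hi), pow_succ']
        simp
  set U : Set (EucE D) := ⋂ i ∈ Finset.range k, (fun x => (B ^ i) x) ⁻¹' V with hU
  have hUopen : IsOpen U := isOpen_biInter_finset fun i _ => hV.preimage (B ^ i).continuous
  have hzU : z ∈ U := by
    simp only [hU, Set.mem_iInter, Set.mem_preimage, Finset.mem_range]
    intro i hi
    rw [← h1 i (le_of_lt hi)]
    exact hz i hi
  have hev : g^[k] =ᶠ[nhds z] fun x => (B ^ k) x := by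
    filter_upwards [hUopen.mem_nhds hzU] with x hx
    apply iter_eq_pow g V B hlin k x
    intro i hi
    simp only [hU, Set.mem_iInter, Set.mem_preimage, Finset.mem_range] at hx
    exact hx i hi
  rw [hev.fderiv_eq]
  exact (B ^ k).fderiv

lemma orth_min (v e : EucE D) (he : ‖e‖ = 1) (t : ℝ) :
    ‖v - (inner ℝ v e : ℝ) • e‖ ≤ ‖v - t • e‖ := by
  set α : ℝ := (inner ℝ v e : ℝ) with hα
  have hperp : (inner ℝ (v - α • e) e : ℝ) = 0 := by
    rw [inner_sub_left, real_inner_smul_left]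
    have : (inner ℝ e e : ℝ) = 1 := by
      rw [real_inner_self_eq_norm_sq, he]; norm_num
    rw [this]; ring
  have hdecomp : v - t • e = (v - α • e) + (α - t) • e := by
    rw [sub_smul]; abel
  have hsq : ‖v - t • e‖ ^ 2 = ‖v - α • e‖ ^ 2 + (α - t) ^ 2 := by
    rw [hdecomp, norm_add_sq_real, real_inner_smul_right, hperp, norm_smul]
    rw [he]
    rw [mul_one, mul_zero, mul_zero, add_zero, Real.norm_eq_abs, sq_abs]
  have h2 : ‖v - α • e‖ ^ 2 ≤ ‖v - t • e‖ ^ 2 := by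
    rw [hsq]; nlinarith [sq_nonneg (α - t)]
  exact (pow_le_pow_iff_left₀ (norm_nonneg _) (norm_nonneg _) two_ne_zero).mp h2

lemma le_sqrt2_mul {a b : ℝ} (ha : 0 ≤ a) (hb : 0 ≤ b) (h : a ^ 2 ≤ 2 * b ^ 2) :
    a ≤ Real.sqrt 2 * b := by
  have h1 : a ≤ Real.sqrt (2 * b ^ 2) := by
    rw [← Real.sqrt_sq ha]; exact Real.sqrt_le_sqrt h
  rwa [Real.sqrt_mul (by norm_num) _, Real.sqrt_sq hb] at h1

lemma norm_mul_min_ang_le (v e : EucE D) (he : ‖e‖ = 1) :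
    ‖v‖ * min (ang v e) 1 ≤ Real.sqrt 2 * ‖v - (inner ℝ v e : ℝ) • e‖ := by
  set α : ℝ := (inner ℝ v e : ℝ) with hα
  set β : ℝ := ‖v - α • e‖ with hβ
  have hβ0 : 0 ≤ β := norm_nonneg _
  rcases eq_or_ne v 0 with rfl | hv
  · simp only [norm_zero, zero_mul]
    positivity
  have hv0 : 0 < ‖v‖ := norm_pos_iff.mpr hv
  have hpyth : ‖v‖ ^ 2 = α ^ 2 + β ^ 2 := by
    have h1 : β ^ 2 = ‖v‖ ^ 2 - 2 * (inner ℝ v (α • e) : ℝ) + ‖α • e‖ ^ 2 := by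
      rw [hβ]; exact norm_sub_sq_real v (α • e)
    rw [real_inner_smul_right, ← hα, norm_smul, Real.norm_eq_abs, he, mul_one, sq_abs] at h1
    nlinarith
  have hang : ang v e = |Real.tan (Real.arccos (α / ‖v‖))| := by
    rw [ang, he, mul_one, hα]
  rcases eq_or_ne α 0 with hα0 | hα0
  · rw [hang, hα0, zero_div, Real.arccos_zero, Real.tan_pi_div_two, abs_zero]
    rw [min_eq_left zero_le_one, mul_zero]
    positivity
  · have hαpos : 0 < |α| := abs_pos.mpr hα0
    have hone : 1 - (α / ‖v‖) ^ 2 = β ^ 2 / ‖v‖ ^ 2 := by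
      field_simp
      nlinarith
    have hsq : Real.sqrt (1 - (α / ‖v‖) ^ 2) = β / ‖v‖ := by
      rw [hone, Real.sqrt_div (sq_nonneg β), Real.sqrt_sq hβ0, Real.sqrt_sq hv0.le]
    have htan : |Real.tan (Real.arccos (α / ‖v‖))| = β / |α| := by
      rw [Real.tan_arccos, hsq, abs_div, abs_of_nonneg (div_nonneg hβ0 hv0.le), abs_div,
        abs_of_pos hv0]
      field_simp
    rw [hang, htan]
    rcases le_total β |α| with hc | hc
    · have hmin : min (β / |α|) 1 = β / |α| :=
        min_eq_left (by rw [div_le_one hαpos]; exact hc)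
      rw [hmin]
      have hva : ‖v‖ ≤ Real.sqrt 2 * |α| := by
        apply le_sqrt2_mul hv0.le (abs_nonneg α)
        rw [hpyth, ← sq_abs α]
        nlinarith
      calc ‖v‖ * (β / |α|) ≤ (Real.sqrt 2 * |α|) * (β / |α|) :=
            mul_le_mul_of_nonneg_right hva (by positivity)
        _ = Real.sqrt 2 * β := by field_simp
    · have hvb : ‖v‖ ≤ Real.sqrt 2 * β := by
        apply le_sqrt2_mul hv0.le hβ0
        rw [hpyth, ← sq_abs α]
        nlinarith
      calc ‖v‖ * min (β / |α|) 1 ≤ ‖v‖ * 1 :=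
            mul_le_mul_of_nonneg_left (min_le_right _ _) hv0.le
        _ ≤ Real.sqrt 2 * β := by rwa [mul_one]

lemma norm_mul_min_angS_le (Eu : Submodule ℝ (EucE D)) (v vs vu : EucE D)
    (hvu : vu ∈ Eu) (hsum : v = vs + vu) :
    ‖v‖ * min (angS v Eu) 1 ≤ Real.sqrt 2 * ‖vs‖ := by
  have hmin0 : 0 ≤ min (angS v Eu) 1 := le_min (angS_nonneg v Eu) zero_le_one
  have hsqrt1 : (1 : ℝ) ≤ Real.sqrt 2 := by
    rw [show (1:ℝ) = Real.sqrt 1 by simp]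
    exact Real.sqrt_le_sqrt (by norm_num)
  rcases eq_or_ne vu 0 with rfl | hvu0
  · have hv : v = vs := by simpa using hsum
    subst hv
    calc ‖v‖ * min (angS v Eu) 1 ≤ ‖v‖ * 1 :=
          mul_le_mul_of_nonneg_left (min_le_right _ _) (norm_nonneg v)
      _ ≤ Real.sqrt 2 * ‖v‖ := by
          rw [mul_one]
          nlinarith [norm_nonneg v]
  · set e : EucE D := ‖vu‖⁻¹ • vu with hedef
    have hnu : (0:ℝ) < ‖vu‖ := norm_pos_iff.mpr hvu0
    have hee : ‖e‖ = 1 := by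
      rw [hedef, norm_smul, norm_inv, norm_norm, inv_mul_cancel₀ hnu.ne']
    have hem : e ∈ Eu := Eu.smul_mem _ hvu
    have h1 : angS v Eu ≤ ang v e := angS_le_ang v Eu hem hee
    have h2 : ‖v‖ * min (angS v Eu) 1 ≤ ‖v‖ * min (ang v e) 1 :=
      mul_le_mul_of_nonneg_left (min_le_min h1 le_rfl) (norm_nonneg v)
    have h3 := norm_mul_min_ang_le v e hee
    have h4 : ‖v - (inner ℝ v e : ℝ) • e‖ ≤ ‖v - vu‖ := by
      have := orth_min v e hee ‖vu‖
      rwa [show ‖vu‖ • e = vu by rw [hedef, smul_smul, mul_inv_cancel₀ hnu.ne', one_smul]] at this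
    have h5 : v - vu = vs := by rw [hsum]; abel
    rw [h5] at h4
    calc ‖v‖ * min (angS v Eu) 1 ≤ ‖v‖ * min (ang v e) 1 := h2
      _ ≤ Real.sqrt 2 * ‖v - (inner ℝ v e : ℝ) • e‖ := h3
      _ ≤ Real.sqrt 2 * ‖vs‖ := by nlinarith

set_option maxHeartbeats 1000000 in
lemma estimates (A : EucE D ≃L[ℝ] EucE D) (Es Eu : Submodule ℝ (EucE D))
    (hA : HyperbolicSplitting (A : EucE D →L[ℝ] EucE D) Es Eu) :
    ∃ K₆ > (0:ℝ), ∃ K₇ > (0:ℝ), ∀ k : ℕ, ∀ v : EucE D, v ∉ Eu →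
      (K₆ * (subNorm ((A : EucE D →L[ℝ] EucE D) ^ k) Es)⁻¹ * ‖v‖ * min (angS v Eu) 1 ≤
          ‖(((A.symm : EucE D →L[ℝ] EucE D)) ^ k) v‖ ∧
        ‖(((A.symm : EucE D →L[ℝ] EucE D)) ^ k) v‖ ≤
          K₇ * subNorm ((A.symm : EucE D →L[ℝ] EucE D) ^ k) Es * ‖v‖) := by
  obtain ⟨hcompl, hmS, hmU, C, hC, κ, hκ, hs, hu⟩ := hA
  set B : EucE D →L[ℝ] EucE D := (A : EucE D →L[ℝ] EucE D) with hB
  set B' : EucE D →L[ℝ] EucE D := (A.symm : EucE D →L[ℝ] EucE D) with hB'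
  set Ps : EucE D →L[ℝ] EucE D :=
    LinearMap.toContinuousLinearMap (Es.subtype ∘ₗ Es.projectionOnto Eu hcompl) with hPs
  set Pu : EucE D →L[ℝ] EucE D :=
    LinearMap.toContinuousLinearMap (Eu.subtype ∘ₗ Eu.projectionOnto Es hcompl.symm) with hPu
  have hPsmem : ∀ x, Ps x ∈ Es := fun x => (Es.projectionOnto Eu hcompl x).2
  have hPumem : ∀ x, Pu x ∈ Eu := fun x => (Eu.projectionOnto Es hcompl.symm x).2
  have hsum : ∀ x : EucE D, Ps x + Pu x = x := fun x =>
    Submodule.projection_add_projection_eq_self hcompl x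
  set Cp : ℝ := ‖Ps‖ + ‖Pu‖ + 1 with hCp
  have hCp0 : 0 < Cp := by positivity
  have hPsle : ∀ x, ‖Ps x‖ ≤ Cp * ‖x‖ := fun x =>
    (Ps.le_opNorm x).trans (mul_le_mul_of_nonneg_right
      (by rw [hCp]; nlinarith [norm_nonneg Pu]) (norm_nonneg x))
  have hPule : ∀ x, ‖Pu x‖ ≤ Cp * ‖x‖ := fun x =>
    (Pu.le_opNorm x).trans (mul_le_mul_of_nonneg_right
      (by rw [hCp]; nlinarith [norm_nonneg Ps]) (norm_nonneg x))
  have hs2 : (1:ℝ) ≤ Real.sqrt 2 := by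
    rw [show (1:ℝ) = Real.sqrt 1 by simp]
    exact Real.sqrt_le_sqrt (by norm_num)
  have hκk : ∀ k : ℕ, κ ^ k ≤ 1 := fun k => pow_le_one₀ hκ.1.le hκ.2.le
  have hmS' := inv_mem A Es hmS
  have hmU' := inv_mem A Eu hmU
  refine ⟨(Real.sqrt 2 * Cp)⁻¹, by positivity, Cp * (1 + C ^ 2), by positivity, ?_⟩
  intro k v hv
  set s : ℝ := subNorm (B ^ k) Es with hsdef
  set s' : ℝ := subNorm (B' ^ k) Es with hs'def
  set w : EucE D := (B' ^ k) v with hw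
  have hBw : (B ^ k) w = v := pow_cancel A k v
  constructor
  · set ws : EucE D := Ps w with hws
    set wu : EucE D := Pu w with hwu
    have hdec : v = (B ^ k) ws + (B ^ k) wu := by
      rw [← hBw, ← map_add, hsum w]
    have hkey : ‖v‖ * min (angS v Eu) 1 ≤ Real.sqrt 2 * Cp * s * ‖w‖ := by
      have g1 : ‖v‖ * min (angS v Eu) 1 ≤ Real.sqrt 2 * ‖(B ^ k) ws‖ :=
        norm_mul_min_angS_le Eu v _ _ (mem_pow hmU k (hPumem w)) hdec
      have g2 : ‖(B ^ k) ws‖ ≤ s * ‖ws‖ := subNorm_apply_le _ _ (hPsmem w)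
      have g3 : ‖ws‖ ≤ Cp * ‖w‖ := hPsle w
      have hs0 : 0 ≤ s := by rw [hsdef]; exact subNorm_nonneg' _ _
      calc ‖v‖ * min (angS v Eu) 1 ≤ Real.sqrt 2 * ‖(B ^ k) ws‖ := g1
        _ ≤ Real.sqrt 2 * (s * ‖ws‖) :=
            mul_le_mul_of_nonneg_left g2 (Real.sqrt_nonneg 2)
        _ ≤ Real.sqrt 2 * (s * (Cp * ‖w‖)) :=
            mul_le_mul_of_nonneg_left (mul_le_mul_of_nonneg_left g3 hs0) (Real.sqrt_nonneg 2)
        _ = Real.sqrt 2 * Cp * s * ‖w‖ := by ring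
    rcases eq_or_lt_of_le (show (0:ℝ) ≤ s by rw [hsdef]; exact subNorm_nonneg' _ _)
      with hs0 | hs0
    · rw [← hs0, inv_zero, mul_zero, zero_mul, zero_mul]
      exact norm_nonneg w
    · have h1 : (Real.sqrt 2 * Cp)⁻¹ * s⁻¹ * ‖v‖ * min (angS v Eu) 1 =
          (‖v‖ * min (angS v Eu) 1) / (Real.sqrt 2 * Cp * s) := by
        field_simp
      rw [h1, div_le_iff₀ (by positivity)]
      nlinarith [hkey]
  · set vs : EucE D := Ps v with hvs
    set vu : EucE D := Pu v with hvu
    have hvsne : vs ≠ 0 := by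
      intro h0
      apply hv
      have := hsum v
      rw [← hvs, ← hvu, h0, zero_add] at this
      rw [← this]
      exact hPumem v
    have hvs0 : (0:ℝ) < ‖vs‖ := norm_pos_iff.mpr hvsne
    have a1 : ‖(B' ^ k) vs‖ ≤ s' * ‖vs‖ := subNorm_apply_le _ _ (hPsmem v)
    have a2 : ‖(B' ^ k) vu‖ ≤ C * ‖vu‖ := by
      have hm : (B' ^ k) vu ∈ Eu := mem_pow hmU' k (hPumem v)
      have h := hu k _ hm
      rw [pow_cancel A k vu] at h
      nlinarith [norm_nonneg vu, hκk k,
        mul_nonneg (mul_nonneg hC.le (sub_nonneg.mpr (hκk k))) (norm_nonneg vu)]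
    have a4 : 1 ≤ C * s' := by
      have hm : (B' ^ k) vs ∈ Es := mem_pow hmS' k (hPsmem v)
      have h5 := hs k _ hm
      rw [pow_cancel A k vs] at h5
      have h6 : ‖vs‖ ≤ C * (s' * ‖vs‖) := by
        calc ‖vs‖ ≤ C * κ ^ k * ‖(B' ^ k) vs‖ := h5
          _ ≤ C * (s' * ‖vs‖) := by
              nlinarith [norm_nonneg ((B' ^ k) vs), hκk k, pow_pos hκ.1 k,
                norm_nonneg vs, mul_pos hC (pow_pos hκ.1 k)]
      nlinarith
    have hdv : v = vs + vu := (hsum v).symm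
    have hs'0 : (0:ℝ) ≤ s' := by rw [hs'def]; exact subNorm_nonneg' _ _
    have b1 : s' * ‖vs‖ ≤ s' * (Cp * ‖v‖) := mul_le_mul_of_nonneg_left (hPsle v) hs'0
    have b2 : C * ‖vu‖ ≤ C * (Cp * ‖v‖) := mul_le_mul_of_nonneg_left (hPule v) hC.le
    have b3 : C * (Cp * ‖v‖) ≤ (C ^ 2 * s') * (Cp * ‖v‖) := by
      apply mul_le_mul_of_nonneg_right _ (by positivity)
      nlinarith
    have heq : (B' ^ k) v = (B' ^ k) vs + (B' ^ k) vu := by rw [← map_add, ← hdv]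
    have hfin : ‖(B' ^ k) v‖ ≤ ‖(B' ^ k) vs‖ + ‖(B' ^ k) vu‖ := by
      rw [heq]; exact norm_add_le _ _
    have : ‖(B' ^ k) v‖ ≤ s' * (Cp * ‖v‖) + (C ^ 2 * s') * (Cp * ‖v‖) := by linarith
    calc ‖(B' ^ k) v‖ ≤ s' * (Cp * ‖v‖) + (C ^ 2 * s') * (Cp * ‖v‖) := this
      _ = Cp * (1 + C ^ 2) * s' * ‖v‖ := by ring

end Aux

/-! ### Statement -/

section Statement

variable {d : ℕ} {M : Type*} [MetricSpace M] [CompactSpace M]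
  [ChartedSpace (EucE d) M] [IsManifold (𝓡 d) ((⊤ : ℕ∞) : WithTop ℕ∞) M]
  [MeasurableSpace M] [BorelSpace M]
/-- (Angle–norm estimates for a locally linear hyperbolic fixed point.)
In local coordinates on a neighborhood `V` of a hyperbolic fixed point `p₁` of `g`, where `g`
coincides with the hyperbolic linear map `A = Dg(p₁)` with splitting `E^s ⊕ E^u` of `ℝ^{2n}`,
there are constants `K₆, K₇ > 0` such that for every `k`:
(1) for `z ∈ V ∩ g(V) ∩ … ∩ g^k(V)` and `v ∉ E^u` with `ang(Dg^{-k}(z)v, E^u) ≥ 1`,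
`K₆ ‖A^k|E^s‖⁻¹ ‖v‖ min{ang(v,E^u),1} ≤ ‖Dg^{-k}(z)v‖ ≤ K₇ ‖A^{-k}|E^s‖ ‖v‖`;
(2) symmetrically for `z ∈ V ∩ g^{-1}(V) ∩ … ∩ g^{-k}(V)` and `v ∉ E^s`. -/
theorem angle_norm_estimates_linear_hyperbolic (n : ℕ)
    (g ginv : EucE (2 * n) → EucE (2 * n))
    (hgi : Function.LeftInverse ginv g) (hig : Function.RightInverse ginv g)
    (V : Set (EucE (2 * n))) (hV : IsOpen V)
    (p₁ : EucE (2 * n)) (hp₁ : p₁ ∈ V) (hfix : g p₁ = p₁)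
    (A : EucE (2 * n) ≃L[ℝ] EucE (2 * n))
    (Es Eu : Submodule ℝ (EucE (2 * n)))
    (hA : HyperbolicSplitting (A : EucE (2 * n) →L[ℝ] EucE (2 * n)) Es Eu)
    (hlin : ∀ x ∈ V, g x = A x) :
    ∃ K₆ > (0 : ℝ), ∃ K₇ > (0 : ℝ), ∀ k : ℕ,
      (∀ z ∈ ⋂ j ∈ Finset.range (k + 1), (g^[j]) '' V,
        ∀ v : EucE (2 * n), v ∉ Eu →
          1 ≤ angS (fderiv ℝ (ginv^[k]) z v) Eu →
          K₆ * (subNorm ((A : EucE (2 * n) →L[ℝ] EucE (2 * n)) ^ k) Es)⁻¹ * ‖v‖ *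
              min (angS v Eu) 1 ≤ ‖fderiv ℝ (ginv^[k]) z v‖ ∧
            ‖fderiv ℝ (ginv^[k]) z v‖ ≤
              K₇ * subNorm ((A.symm : EucE (2 * n) →L[ℝ] EucE (2 * n)) ^ k) Es * ‖v‖) ∧
      (∀ z ∈ ⋂ j ∈ Finset.range (k + 1), (ginv^[j]) '' V,
        ∀ v : EucE (2 * n), v ∉ Es →
          1 ≤ angS (fderiv ℝ (g^[k]) z v) Es →
          K₆ * (subNorm ((A.symm : EucE (2 * n) →L[ℝ] EucE (2 * n)) ^ k) Eu)⁻¹ * ‖v‖ *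
              min (angS v Es) 1 ≤ ‖fderiv ℝ (g^[k]) z v‖ ∧
            ‖fderiv ℝ (g^[k]) z v‖ ≤
              K₇ * subNorm ((A : EucE (2 * n) →L[ℝ] EucE (2 * n)) ^ k) Eu * ‖v‖) := by
  obtain ⟨K₆, hK₆, K₇, hK₇, hest⟩ := estimates A Es Eu hA
  obtain ⟨K₆', hK₆', K₇', hK₇', hest'⟩ := estimates A.symm Eu Es hA.symm'
  simp only [ContinuousLinearEquiv.symm_symm] at hest'
  refine ⟨min K₆ K₆', lt_min hK₆ hK₆', max K₇ K₇',
    lt_of_lt_of_le hK₇ (le_max_left _ _), fun k => ⟨?_, ?_⟩⟩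
  · intro z hz v hv _
    simp only [Set.mem_iInter] at hz
    have hmem : ∀ i < k, ginv^[i] z ∈ (⇑A) '' V := by
      intro i hi
      obtain ⟨y, hy, hgy⟩ := hz (i + 1) (Finset.mem_range.mpr (by omega))
      have hzz : z = g^[i] (g y) := by rw [← hgy, Function.iterate_succ_apply]
      rw [hzz, (hgi.iterate i) (g y)]
      exact ⟨y, hy, (hlin y hy).symm⟩
    have hVA : IsOpen ((⇑A) '' V) := A.toHomeomorph.isOpenMap V hV
    have hlin' : ∀ x ∈ (⇑A) '' V,
        ginv x = (A.symm : EucE (2 * n) →L[ℝ] EucE (2 * n)) x := by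
      rintro x ⟨y, hy, rfl⟩
      have h1 : ginv (A y) = y := by rw [← hlin y hy]; exact hgi y
      rw [h1]
      simp
    have hD : fderiv ℝ (ginv^[k]) z = (A.symm : EucE (2 * n) →L[ℝ] EucE (2 * n)) ^ k :=
      fderiv_iter_eq_pow ginv ((⇑A) '' V) hVA _ hlin' k z hmem
    rw [hD]
    obtain ⟨h1, h2⟩ := hest k v hv
    constructor
    · refine le_trans ?_ h1
      have m0 : 0 ≤ min (angS v Eu) 1 := le_min (angS_nonneg v Eu) zero_le_one
      have i0 : 0 ≤ (subNorm ((A : EucE (2 * n) →L[ℝ] EucE (2 * n)) ^ k) Es)⁻¹ :=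
        inv_nonneg.mpr (subNorm_nonneg' _ _)
      refine mul_le_mul_of_nonneg_right (mul_le_mul_of_nonneg_right
        (mul_le_mul_of_nonneg_right (min_le_left _ _) i0) (norm_nonneg v)) m0
    · refine h2.trans ?_
      exact mul_le_mul_of_nonneg_right (mul_le_mul_of_nonneg_right
        (le_max_left _ _) (subNorm_nonneg' _ _)) (norm_nonneg v)
  · intro z hz v hv _
    simp only [Set.mem_iInter] at hz
    have hmem : ∀ i < k, g^[i] z ∈ V := by
      intro i hi
      obtain ⟨y, hy, hgy⟩ := hz i (Finset.mem_range.mpr (by omega))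
      rw [← hgy, (hig.iterate i) y]
      exact hy
    have hlin'' : ∀ x ∈ V, g x = (A : EucE (2 * n) →L[ℝ] EucE (2 * n)) x := by
      intro x hx
      rw [hlin x hx]
      simp
    have hD : fderiv ℝ (g^[k]) z = (A : EucE (2 * n) →L[ℝ] EucE (2 * n)) ^ k :=
      fderiv_iter_eq_pow g V hV _ hlin'' k z hmem
    rw [hD]
    obtain ⟨h1, h2⟩ := hest' k v hv
    constructor
    · refine le_trans ?_ h1
      have m0 : 0 ≤ min (angS v Es) 1 := le_min (angS_nonneg v Es) zero_le_one
      have i0 : 0 ≤ (subNorm ((A.symm : EucE (2 * n) →L[ℝ] EucE (2 * n)) ^ k) Eu)⁻¹ :=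
        inv_nonneg.mpr (subNorm_nonneg' _ _)
      refine mul_le_mul_of_nonneg_right (mul_le_mul_of_nonneg_right
        (mul_le_mul_of_nonneg_right (min_le_right _ _) i0) (norm_nonneg v)) m0
    · refine h2.trans ?_
      exact mul_le_mul_of_nonneg_right (mul_le_mul_of_nonneg_right
        (le_max_right _ _) (subNorm_nonneg' _ _)) (norm_nonneg v)


end Statement
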